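/- Let n ≥ 1, fix a distinguished index 0 in {0,…,n−1}, and let S be an n×n complex matrix that is unitary and symmetric (S^T = S) with S_{0d} ≠ 0 for every d. Define the Verlinde numbers N_{ab}^c = Σ_d S_{ad} S_{bd} conj(S_{cd}) / S_{0d}. Then the vectors π_a ∈ ℂ^n with components (π_a)_c = S_{0a} · conj(S_{ac}) are orthogonal idempotents for the product with structure constants N: explicitly, for all a, b, c, Σ_{e,f} (π_a)_e (π_b)_f N_{ef}^c = δ_{ab} · (π_b)_c. -/

import Mathlib

open Matrix Finset

/-- For a symmetric unitary S-matrix with nonvanishing 0-th row, the vectors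
π_a with components (π_a)_c = S₀ₐ · conj(Sₐ_c) are orthogonal idempotents for the
product whose structure constants are the Verlinde numbers
N_{ab}^c = Σ_d S_{ad} S_{bd} conj(S_{cd}) / S_{0d}. -/
theorem verlinde_orthogonal_idempotents (n : ℕ) (hn : 1 ≤ n)
    (S : Matrix (Fin n) (Fin n) ℂ)
    (hS : S ∈ Matrix.unitaryGroup (Fin n) ℂ)
    (hsymm : Sᵀ = S)
    (hnz : ∀ d : Fin n, S ⟨0, hn⟩ d ≠ 0) :
    ∀ a b c : Fin n,
      (∑ e : Fin n, ∑ f : Fin n,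
        (S ⟨0, hn⟩ a * starRingEnd ℂ (S a e)) * (S ⟨0, hn⟩ b * starRingEnd ℂ (S b f)) *
          (∑ d : Fin n, S e d * S f d * starRingEnd ℂ (S c d) / S ⟨0, hn⟩ d)) =
      (if a = b then 1 else 0) * (S ⟨0, hn⟩ b * starRingEnd ℂ (S b c)) := by
  intro a b c
  have hsym : ∀ i j, S i j = S j i := by
    intro i j
    conv_lhs => rw [← hsymm]
    exact Matrix.transpose_apply S i j
  have key : ∀ x d : Fin n, (∑ e, starRingEnd ℂ (S x e) * S e d) = if x = d then (1:ℂ) else 0 := by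
    intro x d
    have h1 : star S * S = 1 := hS.1
    have h2 := congrArg (fun M => M x d) h1
    simp only [Matrix.mul_apply, Matrix.one_apply, Matrix.star_apply] at h2
    rw [← h2]
    refine Finset.sum_congr rfl fun e _ => ?_
    rw [hsym e x]
    rfl
  have swap3 : ∀ g : Fin n → Fin n → Fin n → ℂ,
      (∑ e, ∑ f, ∑ d, g e f d) = ∑ d, ∑ e, ∑ f, g e f d := by
    intro g
    calc (∑ e, ∑ f, ∑ d, g e f d)
        = ∑ e, ∑ d, ∑ f, g e f d := Finset.sum_congr rfl fun _ _ => Finset.sum_comm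
      _ = ∑ d, ∑ e, ∑ f, g e f d := Finset.sum_comm
  have step1 :
      (∑ e : Fin n, ∑ f : Fin n,
        (S ⟨0, hn⟩ a * starRingEnd ℂ (S a e)) * (S ⟨0, hn⟩ b * starRingEnd ℂ (S b f)) *
          (∑ d : Fin n, S e d * S f d * starRingEnd ℂ (S c d) / S ⟨0, hn⟩ d)) =
      ∑ d : Fin n, (if a = d then (1:ℂ) else 0) * (if b = d then (1:ℂ) else 0) *
        (S ⟨0, hn⟩ a * S ⟨0, hn⟩ b * starRingEnd ℂ (S c d) / S ⟨0, hn⟩ d) := by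
    simp_rw [Finset.mul_sum]
    rw [swap3]
    refine Finset.sum_congr rfl fun d _ => ?_
    rw [← key a d, ← key b d]
    rw [Finset.sum_mul, Finset.sum_mul]
    refine Finset.sum_congr rfl fun e _ => ?_
    rw [Finset.mul_sum, Finset.sum_mul]
    refine Finset.sum_congr rfl fun f _ => ?_
    ring
  rw [step1]
  by_cases hab : a = b
  · subst hab
    simp only [if_pos rfl, one_mul]
    rw [Finset.sum_eq_single a]
    · simp only [if_pos rfl, one_mul]
      rw [hsym c a]
      field_simp [hnz a]
      simp
    · intro d _ hd
      simp [Ne.symm hd]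
    · intro h; exact absurd (Finset.mem_univ a) h
  · simp only [if_neg hab, zero_mul]
    refine Finset.sum_eq_zero fun d _ => ?_
    by_cases had : a = d
    · subst had
      simp only [if_neg (show ¬ b = a from fun h => hab h.symm)]
      ring
    · simp [had]
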